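/- There exists a polynomial F ∈ ℂ[X,Y] of total degree 3 which is irreducible in ℂ[X,Y] and satisfies: F(0,0) = F(2,3) = F(−2,3) = 0; F(1,1) = 0 and the derivative at t = 0 of t ↦ F(1+t,1+t) vanishes; F(−1,1) = 0 and the derivative at t = 0 of t ↦ F(−1−t,1+t) vanishes; F(0,5) = 0 and (∂F/∂X)(0,5) = 0. -/

import Mathlib

open MvPolynomial

noncomputable def Fpoly : MvPolynomial (Fin 2) ℂ :=
  C 3 * X 1 ^ 3 - C 16 * X 1 ^ 2 + C 2 * X 0 ^ 2 * X 1 + C 6 * X 0 ^ 2 + C 5 * X 1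

-- coefficients in ℂ[Y]
noncomputable def apoly : Polynomial ℂ := 2 * Polynomial.X + 6
noncomputable def cpoly : Polynomial ℂ :=
  3 * Polynomial.X ^ 3 - 16 * Polynomial.X ^ 2 + 5 * Polynomial.X

noncomputable def qpoly : Polynomial (Polynomial ℂ) :=
  Polynomial.C apoly * Polynomial.X ^ 2 + Polynomial.C cpoly

lemma apoly_ne : apoly ≠ 0 := by
  intro h
  have := congrArg (Polynomial.eval 0) h
  simp [apoly] at this

lemma coprime_ac : IsCoprime apoly cpoly := by
  refine ⟨Polynomial.C (1/480 : ℂ) * (3 * Polynomial.X ^ 2 - 25 * Polynomial.X + 80),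
    Polynomial.C (1/480 : ℂ) * (-2), ?_⟩
  have h480 : (3 * Polynomial.X ^ 2 - 25 * Polynomial.X + 80) * apoly
      + (-2) * cpoly = (480 : Polynomial ℂ) := by
    simp only [apoly, cpoly]; ring
  have hC : (Polynomial.C (1/480 : ℂ)) * 480 = 1 := by
    rw [show (480 : Polynomial ℂ) = Polynomial.C 480 from (map_ofNat Polynomial.C 480).symm,
      ← Polynomial.C_mul]
    norm_num
  calc Polynomial.C (1/480 : ℂ) * (3 * Polynomial.X ^ 2 - 25 * Polynomial.X + 80) * apoly
        + Polynomial.C (1/480 : ℂ) * (-2) * cpoly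
      = Polynomial.C (1/480 : ℂ) * ((3 * Polynomial.X ^ 2 - 25 * Polynomial.X + 80) * apoly
        + (-2) * cpoly) := by ring
    _ = 1 := by rw [h480]; exact hC

lemma qpoly_coeff2 : qpoly.coeff 2 = apoly := by
  simp [qpoly, Polynomial.coeff_add, Polynomial.coeff_C_mul, Polynomial.coeff_X_pow,
    Polynomial.coeff_C]

lemma qpoly_coeff1 : qpoly.coeff 1 = 0 := by
  simp [qpoly, Polynomial.coeff_add, Polynomial.coeff_C_mul, Polynomial.coeff_X_pow,
    Polynomial.coeff_C]

lemma qpoly_coeff0 : qpoly.coeff 0 = cpoly := by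
  simp [qpoly, Polynomial.coeff_add, Polynomial.coeff_C_mul, Polynomial.coeff_X_pow,
    Polynomial.coeff_C]

lemma qpoly_natDegree : qpoly.natDegree = 2 := by
  rw [qpoly]
  compute_degree!
  exact apoly_ne

lemma qpoly_ne : qpoly ≠ 0 := by
  intro h
  have := qpoly_natDegree
  rw [h] at this
  simp at this

-- a factor of degree 0 must be a unit
lemma deg0_unit (g h : Polynomial (Polynomial ℂ)) (hq : qpoly = g * h)
    (hg : g.natDegree = 0) : IsUnit g := by
  obtain ⟨g₀, rfl⟩ := Polynomial.natDegree_eq_zero.mp hg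
  have hda : g₀ ∣ apoly := by
    refine ⟨h.coeff 2, ?_⟩
    rw [← qpoly_coeff2, hq, Polynomial.coeff_C_mul]
  have hdc : g₀ ∣ cpoly := by
    refine ⟨h.coeff 0, ?_⟩
    rw [← qpoly_coeff0, hq, Polynomial.coeff_C_mul]
  exact (Polynomial.isUnit_C).mpr (coprime_ac.isUnit_of_dvd' hda hdc)

lemma qpoly_irred : Irreducible qpoly := by
  constructor
  · intro h
    have := Polynomial.natDegree_eq_zero_of_isUnit h
    rw [qpoly_natDegree] at this
    exact two_ne_zero this
  · intro g h hq
    by_contra hcon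
    push_neg at hcon
    obtain ⟨hgu, hhu⟩ := hcon
    have hg0 : g ≠ 0 := by rintro rfl; exact qpoly_ne (by simpa using hq)
    have hh0 : h ≠ 0 := by rintro rfl; exact qpoly_ne (by simpa using hq)
    have hdeg : g.natDegree + h.natDegree = 2 := by
      rw [← Polynomial.natDegree_mul hg0 hh0, ← hq, qpoly_natDegree]
    -- case analysis on degree of g
    rcases Nat.lt_or_ge g.natDegree 1 with hg1 | hg1
    · exact hgu (deg0_unit g h hq (Nat.lt_one_iff.mp hg1))
    rcases Nat.lt_or_ge h.natDegree 1 with hh1 | hh1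
    · exact hhu (deg0_unit h g (by rw [hq, mul_comm]) (Nat.lt_one_iff.mp hh1))
    have hgd : g.natDegree = 1 := by omega
    have hhd : h.natDegree = 1 := by omega
    -- both linear
    have hge := Polynomial.eq_X_add_C_of_natDegree_le_one (by omega : g.natDegree ≤ 1)
    have hhe := Polynomial.eq_X_add_C_of_natDegree_le_one (by omega : h.natDegree ≤ 1)
    set g1 := g.coeff 1 with hg1def
    set g0 := g.coeff 0 with hg0def
    set h1 := h.coeff 1 with hh1def
    set h0 := h.coeff 0 with hh0def
    have expand : g * h = Polynomial.C (g1 * h1) * Polynomial.X ^ 2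
        + Polynomial.C (g1 * h0 + g0 * h1) * Polynomial.X + Polynomial.C (g0 * h0) := by
      rw [hge, hhe]
      simp only [Polynomial.C_mul, Polynomial.C_add]
      ring
    have e2 : apoly = g1 * h1 := by
      have := congrArg (fun z => Polynomial.coeff z 2) (hq.trans expand)
      simpa [qpoly_coeff2, Polynomial.coeff_add, Polynomial.coeff_C_mul, mul_assoc,
        Polynomial.coeff_X_pow, Polynomial.coeff_X, Polynomial.coeff_C] using this
    have e1 : (0 : Polynomial ℂ) = g1 * h0 + g0 * h1 := by
      have := congrArg (fun z => Polynomial.coeff z 1) (hq.trans expand)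
      simpa [qpoly_coeff1, Polynomial.coeff_add, Polynomial.coeff_C_mul, mul_assoc,
        Polynomial.coeff_X_pow, Polynomial.coeff_X, Polynomial.coeff_C] using this
    have e0 : cpoly = g0 * h0 := by
      have := congrArg (fun z => Polynomial.coeff z 0) (hq.trans expand)
      simpa [qpoly_coeff0, Polynomial.coeff_add, Polynomial.coeff_C_mul,
        Polynomial.coeff_X_pow, Polynomial.coeff_X, Polynomial.coeff_C] using this
    -- evaluate at 0
    have E2 : Polynomial.eval 0 g1 * Polynomial.eval 0 h1 = 6 := by
      have := congrArg (Polynomial.eval 0) e2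
      simp [apoly] at this
      exact this.symm
    have E1 : Polynomial.eval 0 g1 * Polynomial.eval 0 h0
        + Polynomial.eval 0 g0 * Polynomial.eval 0 h1 = 0 := by
      have := congrArg (Polynomial.eval 0) e1
      simp at this
      exact this.symm
    have E0 : Polynomial.eval 0 g0 * Polynomial.eval 0 h0 = 0 := by
      have := congrArg (Polynomial.eval 0) e0
      simp [cpoly] at this
      exact mul_eq_zero.mpr this
    have hg1ne : Polynomial.eval 0 g1 ≠ 0 := by
      intro hz; rw [hz, zero_mul] at E2; exact (by norm_num : (0:ℂ) ≠ 6) E2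
    have hh1ne : Polynomial.eval 0 h1 ≠ 0 := by
      intro hz; rw [hz, mul_zero] at E2; exact (by norm_num : (0:ℂ) ≠ 6) E2
    have hzero : Polynomial.eval 0 g0 = 0 ∧ Polynomial.eval 0 h0 = 0 := by
      rcases mul_eq_zero.mp E0 with hz | hz
      · refine ⟨hz, ?_⟩
        rw [hz, zero_mul, add_zero] at E1
        exact (mul_eq_zero.mp E1).resolve_left hg1ne
      · refine ⟨?_, hz⟩
        rw [hz, mul_zero, zero_add] at E1
        exact (mul_eq_zero.mp E1).resolve_right hh1ne
    obtain ⟨hgz, hhz⟩ := hzero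
    have hxg : Polynomial.X ∣ g0 := Polynomial.X_dvd_iff.mpr
      (by rw [Polynomial.coeff_zero_eq_eval_zero]; exact hgz)
    have hxh : Polynomial.X ∣ h0 := Polynomial.X_dvd_iff.mpr
      (by rw [Polynomial.coeff_zero_eq_eval_zero]; exact hhz)
    obtain ⟨g0', hg0'⟩ := hxg
    obtain ⟨h0', hh0'⟩ := hxh
    have hc1 : cpoly.coeff 1 = 0 := by
      rw [e0, hg0', hh0',
        show Polynomial.X * g0' * (Polynomial.X * h0') = g0' * h0' * Polynomial.X ^ 2 by ring,
        Polynomial.coeff_mul_X_pow']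
      norm_num
    have hc5 : cpoly.coeff 1 = 5 := by
      simp [cpoly, Polynomial.coeff_add, Polynomial.coeff_sub, Polynomial.coeff_X_pow,
        Polynomial.coeff_ofNat_mul, Polynomial.coeff_X]
    rw [hc1] at hc5
    exact (by norm_num : (0:ℂ) ≠ 5) hc5
open MvPolynomial

noncomputable def e1 : MvPolynomial (Fin 1) ℂ ≃ₐ[ℂ] Polynomial ℂ :=
  (MvPolynomial.finSuccEquiv ℂ 0).trans
    (Polynomial.mapAlgEquiv (isEmptyAlgEquiv ℂ (Fin 0)))

noncomputable def e : MvPolynomial (Fin 2) ℂ ≃ₐ[ℂ] Polynomial (Polynomial ℂ) :=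
  (MvPolynomial.finSuccEquiv ℂ 1).trans (Polynomial.mapAlgEquiv e1)

lemma e1_X (i : Fin 1) : e1 (X i) = Polynomial.X := by
  have : i = 0 := Subsingleton.elim _ _
  subst this
  rw [e1, AlgEquiv.trans_apply, finSuccEquiv_X_zero]
  simp [Polynomial.mapAlgEquiv]

lemma e1_C (r : ℂ) : e1 (C r) = Polynomial.C r := by
  rw [e1, AlgEquiv.trans_apply]
  rw [show (MvPolynomial.finSuccEquiv ℂ 0) (C r) = Polynomial.C (C r) by
    simp [finSuccEquiv_apply]]
  simp [Polynomial.mapAlgEquiv]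
  exact (MvPolynomial.coeff_C 0 r).trans (if_pos rfl)

lemma e_X0 : e (X 0) = Polynomial.X := by
  rw [e, AlgEquiv.trans_apply, finSuccEquiv_X_zero]
  simp [Polynomial.mapAlgEquiv]

lemma e_X1 : e (X 1) = Polynomial.C Polynomial.X := by
  rw [e, AlgEquiv.trans_apply,
    show (X 1 : MvPolynomial (Fin 2) ℂ) = X (Fin.succ 0) from rfl, finSuccEquiv_X_succ]
  simp [Polynomial.mapAlgEquiv, e1_X]

lemma e_C (r : ℂ) : e (C r) = Polynomial.C (Polynomial.C r) := by
  rw [e, AlgEquiv.trans_apply]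
  rw [show (MvPolynomial.finSuccEquiv ℂ 1) (C r) = Polynomial.C (C r) by
    simp [finSuccEquiv_apply]]
  simp [Polynomial.mapAlgEquiv, e1_C]

lemma e_F : e Fpoly = qpoly := by
  simp only [Fpoly, qpoly, apoly, cpoly, map_add, map_sub, map_mul, map_pow, map_ofNat,
    e_X0, e_X1, e_C]
  ring

lemma F_irred : Irreducible Fpoly := by
  have h : Irreducible (e Fpoly) := e_F ▸ qpoly_irred
  exact (MulEquiv.irreducible_iff e).mp h

lemma Fmon : Fpoly = monomial (Finsupp.single 1 3) 3 + monomial (Finsupp.single 1 2) (-16)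
    + monomial (Finsupp.single 0 2 + Finsupp.single 1 1) 2
    + monomial (Finsupp.single 0 2) 6 + monomial (Finsupp.single 1 1) 5 := by
  have h2 : monomial (Finsupp.single (0:Fin 2) 2 + Finsupp.single 1 1) (2:ℂ)
      = C 2 * X 0 ^ 2 * X 1 := by
    rw [show ((X 0 : MvPolynomial (Fin 2) ℂ) ^ 2) = monomial (Finsupp.single 0 2) 1 from
        X_pow_eq_monomial,
      show (X 1 : MvPolynomial (Fin 2) ℂ) = monomial (Finsupp.single 1 1) 1 by
        rw [← pow_one (X 1 : MvPolynomial (Fin 2) ℂ)]; exact X_pow_eq_monomial]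
    rw [C_mul_monomial, monomial_mul]
    norm_num
  rw [h2]
  simp only [monomial_eq, Finsupp.prod_single_index, pow_zero, pow_one, mul_one, one_mul,
    map_neg, Fpoly]
  ring

lemma Ftd : Fpoly.totalDegree = 3 := by
  apply le_antisymm
  · rw [Fmon]
    refine (totalDegree_add _ _).trans (max_le ((totalDegree_add _ _).trans (max_le
      ((totalDegree_add _ _).trans (max_le ((totalDegree_add _ _).trans (max_le ?_ ?_)) ?_)) ?_)) ?_)
    all_goals
      rw [totalDegree_monomial _ (by norm_num)]
      simp [Finsupp.sum_add_index, Finsupp.sum_single_index]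
  · have hne : Finsupp.single (0:Fin 2) 2 + Finsupp.single 1 1 ≠ Finsupp.single 1 3 := by
      intro h
      have := DFunLike.congr_fun h 0
      simp [Finsupp.single_apply] at this
    have hmem : Finsupp.single (1 : Fin 2) 3 ∈ Fpoly.support := by
      rw [mem_support_iff, Fmon]
      simp [coeff_monomial, Finsupp.single_eq_single_iff, hne]
    have h := MvPolynomial.le_totalDegree hmem
    simpa [Finsupp.sum_single_index] using h

/-- There is an irreducible polynomial F ∈ ℂ[X,Y] of total
degree 3 through (0,0), (2,3), (−2,3), tangent to the line Y = X at (1,1),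
tangent to the line Y = −X at (−1,1), and tangent to the horizontal line
Y = 5 at (0,5). -/
theorem stmt_8 :
    ∃ F : MvPolynomial (Fin 2) ℂ, F.totalDegree = 3 ∧ Irreducible F ∧
      MvPolynomial.eval ![0, 0] F = 0 ∧
      MvPolynomial.eval ![2, 3] F = 0 ∧
      MvPolynomial.eval ![-2, 3] F = 0 ∧
      (MvPolynomial.eval ![1, 1] F = 0 ∧
        Polynomial.eval (0 : ℂ) (Polynomial.derivative
          (MvPolynomial.aeval
            (![1 + Polynomial.X, 1 + Polynomial.X] : Fin 2 → Polynomial ℂ) F)) = 0) ∧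
      (MvPolynomial.eval ![-1, 1] F = 0 ∧
        Polynomial.eval (0 : ℂ) (Polynomial.derivative
          (MvPolynomial.aeval
            (![-1 - Polynomial.X, 1 + Polynomial.X] : Fin 2 → Polynomial ℂ) F)) = 0) ∧
      (MvPolynomial.eval ![0, 5] F = 0 ∧
        MvPolynomial.eval ![0, 5] (MvPolynomial.pderiv 0 F) = 0) := by
  refine ⟨Fpoly, Ftd, F_irred, ?_, ?_, ?_, ⟨?_, ?_⟩, ⟨?_, ?_⟩, ⟨?_, ?_⟩⟩
  · simp [Fpoly]
  · simp [Fpoly]; norm_num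
  · simp [Fpoly]; norm_num
  · simp [Fpoly]; norm_num
  · simp [Fpoly, Polynomial.derivative_pow]; norm_num
  · simp [Fpoly]; norm_num
  · simp [Fpoly, Polynomial.derivative_pow]; norm_num
  · simp [Fpoly]; norm_num
  · simp [Fpoly, pderiv_mul, pderiv_pow, pderiv_C, pderiv_X]
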